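/- Let n ≥ 1 and let Λ, T be n×n unitary matrices satisfying the DMSA equations with spectrum {2}, i.e., 4Λ = [[Λ,Λ†],Λ] + [[Λ,T],T†] + [[Λ,T†],T] and 4T = [[T,T†],T] + [[T,Λ],Λ†] + [[T,Λ†],Λ]. If the representation is irreducible, i.e., the only subspaces of ℂⁿ invariant under both Λ and T are 0 and ℂⁿ, then n = 4. -/

import Mathlib

open scoped Matrix BigOperators

/-- The commutator `[A,B] = AB − BA` of square matrices. -/
noncomputable def matComm {n : ℕ} (A B : Matrix (Fin n) (Fin n) ℂ) : Matrix (Fin n) (Fin n) ℂ :=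
  A * B - B * A

section DMSAHelpers

variable {n : ℕ}

/-- left inverses transfer through products -/
lemma dmsa_leftinv_mul {N M N' M' : Matrix (Fin n) (Fin n) ℂ} (h : N * M = 1) (h' : N' * M' = 1) :
    (N' * N) * (M * M') = 1 := by
  rw [mul_assoc, ← mul_assoc N M M', h, one_mul, h']

lemma dmsa_mulVec_injective {N M : Matrix (Fin n) (Fin n) ℂ} (h : N * M = 1) :
    Function.Injective M.mulVec := by
  intro x y hxy
  have := congrArg N.mulVec hxy
  rwa [Matrix.mulVec_mulVec, Matrix.mulVec_mulVec, h, Matrix.one_mulVec, Matrix.one_mulVec] at this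

lemma dmsa_eig_ne_zero {N M : Matrix (Fin n) (Fin n) ℂ} {v : Fin n → ℂ} {c : ℂ}
    (h : N * M = 1) (hv : v ≠ 0) (he : M.mulVec v = c • v) : c ≠ 0 := by
  intro hc
  apply hv
  have h2 : N.mulVec (M.mulVec v) = v := by
    rw [Matrix.mulVec_mulVec, h, Matrix.one_mulVec]
  rw [he, hc, zero_smul, Matrix.mulVec_zero] at h2
  exact h2.symm

lemma dmsa_restrict_eig {V : Type} [AddCommGroup V] [Module ℂ V] [FiniteDimensional ℂ V]
    (φ : Module.End ℂ V) (S : Submodule ℂ V) (hS : S ≠ ⊥) (hinv : ∀ x ∈ S, φ x ∈ S) :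
    ∃ c : ℂ, ∃ v ∈ S, v ≠ 0 ∧ φ v = c • v := by
  haveI : Nontrivial S := Submodule.nontrivial_iff_ne_bot.mpr hS
  let ψ : Module.End ℂ S := φ.restrict hinv
  obtain ⟨c, hc⟩ := Module.End.exists_eigenvalue ψ
  obtain ⟨w, hw⟩ := hc.exists_hasEigenvector
  refine ⟨c, (w : V), w.2, ?_, ?_⟩
  · simpa [Submodule.coe_eq_zero] using hw.right
  · have := hw.apply_eq_smul
    have h2 : ((ψ w : S) : V) = c • (w : V) := by rw [this]; rfl
    rw [← h2]; rfl

lemma dmsa_exists_triple_eig (hn : 0 < n) (f g h : Matrix (Fin n) (Fin n) ℂ)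
    (hfg : f * g = g * f) (hfh : f * h = h * f) (hgh : g * h = h * g) :
    ∃ v : Fin n → ℂ, v ≠ 0 ∧ ∃ a b c : ℂ,
      f.mulVec v = a • v ∧ g.mulVec v = b • v ∧ h.mulVec v = c • v := by
  haveI : Nonempty (Fin n) := ⟨⟨0, hn⟩⟩
  set F := f.mulVecLin with hF
  set G := g.mulVecLin with hG
  set H := h.mulVecLin with hH
  have commFG : ∀ x, F (G x) = G (F x) := fun x => by
    rw [hF, hG, ← LinearMap.comp_apply, ← LinearMap.comp_apply, ← Matrix.mulVecLin_mul,
      ← Matrix.mulVecLin_mul, hfg]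
  have commFH : ∀ x, F (H x) = H (F x) := fun x => by
    rw [hF, hH, ← LinearMap.comp_apply, ← LinearMap.comp_apply, ← Matrix.mulVecLin_mul,
      ← Matrix.mulVecLin_mul, hfh]
  have commGH : ∀ x, G (H x) = H (G x) := fun x => by
    rw [hG, hH, ← LinearMap.comp_apply, ← LinearMap.comp_apply, ← Matrix.mulVecLin_mul,
      ← Matrix.mulVecLin_mul, hgh]
  obtain ⟨a, ha⟩ := Module.End.exists_eigenvalue F
  set S1 := Module.End.eigenspace F a with hS1
  have hS1ne : S1 ≠ ⊥ := ha
  have hGinvS1 : ∀ x ∈ S1, G x ∈ S1 := by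
    intro x hx
    rw [hS1, Module.End.mem_eigenspace_iff] at hx ⊢
    rw [commFG, hx, map_smul]
  obtain ⟨b, w, hwS1, hw0, hGw⟩ := dmsa_restrict_eig G S1 hS1ne hGinvS1
  set S2 := S1 ⊓ Module.End.eigenspace G b with hS2
  have hwS2 : w ∈ S2 := ⟨hwS1, Module.End.mem_eigenspace_iff.mpr hGw⟩
  have hS2ne : S2 ≠ ⊥ := Submodule.ne_bot_iff _ |>.mpr ⟨w, hwS2, hw0⟩
  have hHinvS2 : ∀ x ∈ S2, H x ∈ S2 := by
    intro x hx
    rw [hS2, Submodule.mem_inf] at hx ⊢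
    obtain ⟨hx1, hx2⟩ := hx
    rw [Module.End.mem_eigenspace_iff] at hx2
    rw [hS1, Module.End.mem_eigenspace_iff] at hx1
    constructor
    · rw [hS1, Module.End.mem_eigenspace_iff, commFH, hx1, map_smul]
    · rw [Module.End.mem_eigenspace_iff, commGH, hx2, map_smul]
  obtain ⟨c, v, hvS2, hv0, hHv⟩ := dmsa_restrict_eig H S2 hS2ne hHinvS2
  rw [hS2, Submodule.mem_inf] at hvS2
  obtain ⟨hvS1, hvE⟩ := hvS2
  rw [hS1, Module.End.mem_eigenspace_iff] at hvS1
  rw [Module.End.mem_eigenspace_iff] at hvE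
  exact ⟨v, hv0, a, b, c, by simpa [hF, Matrix.mulVecLin_apply] using hvS1,
    by simpa [hG, Matrix.mulVecLin_apply] using hvE,
    by simpa [hH, Matrix.mulVecLin_apply] using hHv⟩

lemma dmsa_expand (Λ T : Matrix (Fin n) (Fin n) ℂ)
    (hT1 : Tᴴ * T = 1) (hT2 : T * Tᴴ = 1) :
    matComm (matComm Λ T) Tᴴ + matComm (matComm Λ Tᴴ) T
      = (4 : ℂ) • Λ - (2 : ℂ) • (T * (Λ * Tᴴ)) - (2 : ℂ) • (Tᴴ * (Λ * T)) := by
  simp only [matComm, sub_mul, mul_sub]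
  rw [mul_assoc Λ T Tᴴ, hT2, mul_one, mul_assoc Λ Tᴴ T, hT1, mul_one,
    ← mul_assoc Tᴴ T Λ, hT1, one_mul, ← mul_assoc T Tᴴ Λ, hT2, one_mul,
    mul_assoc T Λ Tᴴ, mul_assoc Tᴴ Λ T]
  module

/-- one DMSA equation plus unitarity gives the anticommutation `T²Λ = -ΛT²`. -/
lemma dmsa_anticomm (Λ T : Matrix (Fin n) (Fin n) ℂ)
    (hΛ1 : Λᴴ * Λ = 1) (hΛ2 : Λ * Λᴴ = 1) (hT1 : Tᴴ * T = 1) (hT2 : T * Tᴴ = 1)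
    (h1 : (4 : ℂ) • Λ =
      matComm (matComm Λ Λᴴ) Λ + matComm (matComm Λ T) Tᴴ + matComm (matComm Λ Tᴴ) T) :
    T * (T * Λ) = -(Λ * (T * T)) := by
  have e0 : matComm (matComm Λ Λᴴ) Λ = 0 := by
    have : matComm Λ Λᴴ = 0 := by rw [matComm, hΛ2, hΛ1, sub_self]
    rw [this, matComm, zero_mul, mul_zero, sub_self]
  rw [add_assoc, e0, zero_add, dmsa_expand Λ T hT1 hT2] at h1
  rw [sub_sub, ← smul_add] at h1
  have h2 : (2 : ℂ) • (T * (Λ * Tᴴ) + Tᴴ * (Λ * T)) = 0 := sub_eq_self.mp h1.symm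
  have hXY : T * (Λ * Tᴴ) + Tᴴ * (Λ * T) = 0 :=
    (smul_eq_zero.mp h2).resolve_left two_ne_zero
  have h3 : (T * (Λ * Tᴴ) + Tᴴ * (Λ * T)) * T = 0 := by rw [hXY, zero_mul]
  rw [add_mul, mul_assoc T (Λ*Tᴴ) T, mul_assoc Λ Tᴴ T, hT1, mul_one,
    mul_assoc Tᴴ (Λ*T) T, mul_assoc Λ T T] at h3
  have h4 : T * (T * Λ) + T * (Tᴴ * (Λ * (T * T))) = 0 := by
    rw [← mul_add, h3, mul_zero]
  rw [← mul_assoc T Tᴴ _, hT2, one_mul] at h4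
  exact eq_neg_of_add_eq_zero_left h4

end DMSAHelpers

/-- Every irreducible unitary representation of `U₄(A)` with `Spec(A) = {2}` is
four-dimensional. -/
theorem irreducible_unitary_rep_mu_two_is_fourdim (n : ℕ) (hn : 0 < n)
    (Λ T : Matrix (Fin n) (Fin n) ℂ)
    (hΛ : Λ ∈ Matrix.unitaryGroup (Fin n) ℂ) (hT : T ∈ Matrix.unitaryGroup (Fin n) ℂ)
    (h1 : (4 : ℂ) • Λ =
      matComm (matComm Λ Λᴴ) Λ + matComm (matComm Λ T) Tᴴ + matComm (matComm Λ Tᴴ) T)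
    (h2 : (4 : ℂ) • T =
      matComm (matComm T Tᴴ) T + matComm (matComm T Λ) Λᴴ + matComm (matComm T Λᴴ) Λ)
    (hirr : ∀ W : Submodule ℂ (Fin n → ℂ),
      (∀ v ∈ W, Λ.mulVec v ∈ W) → (∀ v ∈ W, T.mulVec v ∈ W) → W = ⊥ ∨ W = ⊤) :
    n = 4 := by
  classical
  -- unitarity facts
  obtain ⟨hΛ1', hΛ2'⟩ := Unitary.mem_iff.mp hΛ
  obtain ⟨hT1', hT2'⟩ := Unitary.mem_iff.mp hT
  rw [Matrix.star_eq_conjTranspose] at hΛ1' hΛ2' hT1' hT2'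
  have hΛ1 : Λᴴ * Λ = 1 := hΛ1'
  have hΛ2 : Λ * Λᴴ = 1 := hΛ2'
  have hT1 : Tᴴ * T = 1 := hT1'
  have hT2 : T * Tᴴ = 1 := hT2'
  -- the two anticommutation relations
  have kB : T * (T * Λ) = -(Λ * (T * T)) := dmsa_anticomm Λ T hΛ1 hΛ2 hT1 hT2 h1
  have kA : Λ * (Λ * T) = -(T * (Λ * Λ)) := dmsa_anticomm T Λ hT1 hT2 hΛ1 hΛ2 h2
  -- sign-pushing rewrite rules
  have hTA : ∀ X : Matrix (Fin n) (Fin n) ℂ, T * (Λ * (Λ * X)) = -(Λ * (Λ * (T * X))) := by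
    intro X
    calc T * (Λ * (Λ * X)) = (T * (Λ * Λ)) * X := by simp only [mul_assoc]
    _ = (-(Λ * (Λ * T))) * X := by rw [kA, neg_neg]
    _ = -(Λ * (Λ * (T * X))) := by simp only [neg_mul, mul_assoc]
  have hTA' : T * (Λ * Λ) = -(Λ * (Λ * T)) := by
    rw [kA, neg_neg]
  have hBL : ∀ X : Matrix (Fin n) (Fin n) ℂ, T * (T * (Λ * X)) = -(Λ * (T * (T * X))) := by
    intro X
    calc T * (T * (Λ * X)) = (T * (T * Λ)) * X := by simp only [mul_assoc]
    _ = (-(Λ * (T * T))) * X := by rw [kB]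
    _ = -(Λ * (T * (T * X))) := by simp only [neg_mul, mul_assoc]
  -- commutation identities for the family {ΛT, Λ⁴, Λ²T²}
  have c1 : (Λ * T) * ((Λ * Λ) * (Λ * Λ)) = ((Λ * Λ) * (Λ * Λ)) * (Λ * T) := by
    simp only [mul_assoc, hTA, hTA', kB, mul_neg, neg_mul, neg_neg, hBL]
  have c2 : (Λ * T) * ((Λ * Λ) * (T * T)) = ((Λ * Λ) * (T * T)) * (Λ * T) := by
    simp only [mul_assoc, hTA, hTA', kB, mul_neg, neg_mul, neg_neg, hBL]
  have c3 : ((Λ * Λ) * (Λ * Λ)) * ((Λ * Λ) * (T * T))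
      = ((Λ * Λ) * (T * T)) * ((Λ * Λ) * (Λ * Λ)) := by
    simp only [mul_assoc, hTA, hTA', kB, mul_neg, neg_mul, neg_neg, hBL]
  -- further identities
  have m6 : ((Λ * T) * T) * Λ = -((Λ * Λ) * (T * T)) := by
    simp only [mul_assoc, hTA, hTA', kB, mul_neg, neg_mul, neg_neg, hBL]
  have m7 : (Λ * T) * (Λ * Λ) = -((Λ * Λ) * (Λ * T)) := by
    simp only [mul_assoc, hTA, hTA', kB, mul_neg, neg_mul, neg_neg, hBL]
  have m8 : ((Λ * T) * T) * (Λ * (Λ * Λ)) = -((Λ * Λ) * ((Λ * Λ) * (T * T))) := by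
    simp only [mul_assoc, hTA, hTA', kB, mul_neg, neg_mul, neg_neg, hBL]
  have m9 : Λ * (Λ * (Λ * Λ)) = (Λ * Λ) * (Λ * Λ) := by simp only [mul_assoc]
  -- left inverses
  have hu_inv : (Tᴴ * Λᴴ) * (Λ * T) = 1 := dmsa_leftinv_mul hΛ1 hT1
  have hA_inv : (Λᴴ * Λᴴ) * (Λ * Λ) = 1 := dmsa_leftinv_mul hΛ1 hΛ1
  have hB_inv : (Tᴴ * Tᴴ) * (T * T) = 1 := dmsa_leftinv_mul hT1 hT1
  have hAA_inv : ((Λᴴ * Λᴴ) * (Λᴴ * Λᴴ)) * ((Λ * Λ) * (Λ * Λ)) = 1 :=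
    dmsa_leftinv_mul hA_inv hA_inv
  have hAB_inv : ((Tᴴ * Tᴴ) * (Λᴴ * Λᴴ)) * ((Λ * Λ) * (T * T)) = 1 :=
    dmsa_leftinv_mul hA_inv hB_inv
  -- joint eigenvector
  obtain ⟨v, hv0, μ, α, γ, huv, hav, habv⟩ :=
    dmsa_exists_triple_eig hn (Λ * T) ((Λ * Λ) * (Λ * Λ)) ((Λ * Λ) * (T * T)) c1 c2 c3
  have hμ : μ ≠ 0 := dmsa_eig_ne_zero hu_inv hv0 huv
  have hα : α ≠ 0 := dmsa_eig_ne_zero hAA_inv hv0 hav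
  have hγ : γ ≠ 0 := dmsa_eig_ne_zero hAB_inv hv0 habv
  -- the four vectors
  set v2 := Λ.mulVec v with hv2def
  set v1 := Λ.mulVec v2 with hv1def
  set v3 := Λ.mulVec v1 with hv3def
  have hv1' : v1 = (Λ * Λ).mulVec v := by
    rw [hv1def, hv2def, Matrix.mulVec_mulVec]
  have hv3' : v3 = (Λ * (Λ * Λ)).mulVec v := by
    rw [hv3def, hv1', Matrix.mulVec_mulVec]
  -- action of Λ
  have F4 : Λ.mulVec v3 = α • v := by
    rw [hv3', Matrix.mulVec_mulVec, show Λ * (Λ * (Λ * Λ)) = Λ * Λ * (Λ * Λ) from by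
      simp only [mul_assoc], hav]
  -- action of T
  have F5 : T.mulVec v = (μ * α⁻¹) • v3 := by
    apply dmsa_mulVec_injective hΛ1
    rw [Matrix.mulVec_mulVec, huv, Matrix.mulVec_smul, F4, smul_smul]
    rw [mul_assoc, inv_mul_cancel₀ hα, mul_one]
  have F6 : T.mulVec v1 = (-μ) • v2 := by
    rw [hv1', Matrix.mulVec_mulVec, hTA', Matrix.neg_mulVec, ← Matrix.mulVec_mulVec, huv,
      Matrix.mulVec_smul, ← hv2def, neg_smul]
  -- eigen equation for v1 under u = ΛT
  have hu1 : (Λ * T).mulVec v1 = (-μ) • v1 := by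
    rw [hv1', Matrix.mulVec_mulVec, m7, Matrix.neg_mulVec,
      (Matrix.mulVec_mulVec v (Λ * Λ) (Λ * T)).symm, huv, Matrix.mulVec_smul, neg_smul]
  have F7 : T.mulVec v2 = (-(γ * μ⁻¹)) • v := by
    apply dmsa_mulVec_injective hu_inv
    have hrhs : (Λ * T).mulVec ((-(γ * μ⁻¹)) • v) = (-γ) • v := by
      rw [Matrix.mulVec_smul, huv, smul_smul]
      congr 1
      field_simp
    rw [hrhs, hv2def, Matrix.mulVec_mulVec, Matrix.mulVec_mulVec, m6, Matrix.neg_mulVec, habv,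
      neg_smul]
  have F8 : T.mulVec v3 = (γ * μ⁻¹) • v1 := by
    apply dmsa_mulVec_injective hu_inv
    have hrhs : (Λ * T).mulVec ((γ * μ⁻¹) • v1) = (-γ) • v1 := by
      rw [Matrix.mulVec_smul, hu1, smul_smul]
      congr 1
      field_simp
    rw [hrhs, hv3', Matrix.mulVec_mulVec, Matrix.mulVec_mulVec, m8, Matrix.neg_mulVec,
      (Matrix.mulVec_mulVec v (Λ * Λ) ((Λ * Λ) * (T * T))).symm, habv, Matrix.mulVec_smul,
      ← hv1', neg_smul]
  -- the span of the four vectors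
  set W := Submodule.span ℂ ({v, v1, v2, v3} : Set (Fin n → ℂ)) with hWdef
  have hmv : v ∈ W := Submodule.subset_span (by simp)
  have hmv1 : v1 ∈ W := Submodule.subset_span (by simp)
  have hmv2 : v2 ∈ W := Submodule.subset_span (by simp)
  have hmv3 : v3 ∈ W := Submodule.subset_span (by simp)
  have hWclosed : ∀ (M : Matrix (Fin n) (Fin n) ℂ), M.mulVec v ∈ W → M.mulVec v1 ∈ W →
      M.mulVec v2 ∈ W → M.mulVec v3 ∈ W → ∀ x ∈ W, M.mulVec x ∈ W := by
    intro M g0 g1 g2 g3 x hx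
    induction hx using Submodule.span_induction with
    | mem y hy =>
      simp only [Set.mem_insert_iff, Set.mem_singleton_iff] at hy
      rcases hy with rfl | rfl | rfl | rfl <;> assumption
    | zero => rw [Matrix.mulVec_zero]; exact W.zero_mem
    | add y z _ _ ihy ihz => rw [Matrix.mulVec_add]; exact W.add_mem ihy ihz
    | smul a y _ ihy => rw [Matrix.mulVec_smul]; exact W.smul_mem a ihy
  have hWΛ : ∀ x ∈ W, Λ.mulVec x ∈ W := by
    refine hWclosed Λ hmv2 hmv3 ?_ ?_
    · rw [← hv1def]; exact hmv1
    · rw [F4]; exact W.smul_mem α hmv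
  have hWT : ∀ x ∈ W, T.mulVec x ∈ W := by
    refine hWclosed T ?_ ?_ ?_ ?_
    · rw [F5]; exact W.smul_mem _ hmv3
    · rw [F6]; exact W.smul_mem _ hmv2
    · rw [F7]; exact W.smul_mem _ hmv
    · rw [F8]; exact W.smul_mem _ hmv1
  have hWtop : W = ⊤ := by
    rcases hirr W hWΛ hWT with h | h
    · exfalso; apply hv0; simpa [h] using hmv
    · exact h
  -- n ≤ 4
  have hfinrank : Module.finrank ℂ (Fin n → ℂ) = n := Module.finrank_fin_fun ℂ
  have hle4 : n ≤ 4 := by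
    have hsp := finrank_span_le_card (R := ℂ) ({v, v1, v2, v3} : Set (Fin n → ℂ))
    have hcard : ({v, v1, v2, v3} : Set (Fin n → ℂ)).toFinset.card ≤ 4 := by
      rw [Set.toFinset_insert, Set.toFinset_insert, Set.toFinset_insert, Set.toFinset_singleton]
      have c3 := Finset.card_insert_le v2 ({v3} : Finset (Fin n → ℂ))
      have c2 := Finset.card_insert_le v1 (insert v2 ({v3} : Finset (Fin n → ℂ)))
      have c1 := Finset.card_insert_le v (insert v1 (insert v2 ({v3} : Finset (Fin n → ℂ))))
      have := Finset.card_singleton v3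
      omega
    have : Module.finrank ℂ (Fin n → ℂ) ≤ 4 := by
      rw [← finrank_top ℂ (Fin n → ℂ), ← hWtop]
      exact le_trans hsp hcard
    omega
  -- n is even
  have hdetΛ : Λ.det ≠ 0 := by
    have := congrArg Matrix.det hΛ2
    rw [Matrix.det_mul, Matrix.det_one] at this
    exact left_ne_zero_of_mul_eq_one this
  have hdetT : T.det ≠ 0 := by
    have := congrArg Matrix.det hT2
    rw [Matrix.det_mul, Matrix.det_one] at this
    exact left_ne_zero_of_mul_eq_one this
  have hnodd : ¬ Odd n := by
    intro hodd
    have hd := congrArg Matrix.det kA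
    rw [Matrix.det_mul, Matrix.det_mul, Matrix.det_neg, Matrix.det_mul, Matrix.det_mul,
      Fintype.card_fin, hodd.neg_one_pow] at hd
    have h0 : Λ.det * Λ.det * T.det = 0 := by linear_combination (1/2 : ℂ) * hd
    exact (mul_ne_zero (mul_ne_zero hdetΛ hdetΛ) hdetT) h0
  -- v and v1 = Λ²v are linearly independent
  have hv1ne : v1 ≠ 0 := by
    intro hz
    apply hv0
    have : (Λ * Λ).mulVec v = (Λ * Λ).mulVec 0 := by
      rw [Matrix.mulVec_zero, ← hv1', hz]
    exact dmsa_mulVec_injective hA_inv this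
  have hpair : ∀ s t : ℂ, s • v + t • v1 = 0 → s = 0 ∧ t = 0 := by
    intro s t hst
    have e1 := congrArg (Λ * T).mulVec hst
    rw [Matrix.mulVec_add, Matrix.mulVec_smul, Matrix.mulVec_smul, huv, hu1,
      Matrix.mulVec_zero, smul_smul, smul_smul, mul_comm s μ,
      show t * (-μ) = -(μ * t) from by ring, neg_smul, ← sub_eq_add_neg] at e1
    have e2 := congrArg (μ • ·) hst
    simp only [smul_add, smul_smul, smul_zero] at e2
    have e3 : ((μ * s) • v - (μ * t) • v1) + ((μ * s) • v + (μ * t) • v1) = 0 := by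
      rw [e1, e2, add_zero]
    have e4 : (μ * s) • v + (μ * s) • v = 0 := by
      rw [← e3]; abel
    have hs : s = 0 := by
      rw [← two_smul ℂ, smul_smul] at e4
      rcases smul_eq_zero.mp e4 with h | h
      · rcases mul_eq_zero.mp h with h' | h'
        · exact absurd h' two_ne_zero
        · exact (mul_eq_zero.mp h').elim (fun h'' => absurd h'' hμ) id
      · exact absurd h hv0
    refine ⟨hs, ?_⟩
    rw [hs, zero_smul, zero_add] at hst
    rcases smul_eq_zero.mp hst with h | h
    · exact h
    · exact absurd h hv1ne
  have hind : LinearIndependent ℂ ![v, v1] := LinearIndependent.pair_iff.mpr hpair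
  -- n ≠ 2
  have hne2 : n ≠ 2 := by
    intro h2n
    subst h2n
    have hspan : Submodule.span ℂ (Set.range ![v, v1]) = ⊤ := by
      apply Submodule.eq_top_of_finrank_eq
      rw [finrank_span_eq_card hind, Fintype.card_fin, hfinrank]
    have hrange : Set.range ![v, v1] = ({v, v1} : Set (Fin 2 → ℂ)) := by
      simp [Matrix.range_cons, Matrix.range_empty, Set.pair_comm]
    have hmem : v2 ∈ Submodule.span ℂ ({v, v1} : Set (Fin 2 → ℂ)) := by
      rw [← hrange, hspan]; trivial
    obtain ⟨p, q, hpq⟩ := Submodule.mem_span_pair.mp hmem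
    -- apply u = ΛT to the relation
    have e1 := congrArg (Λ * T).mulVec hpq
    rw [Matrix.mulVec_add, Matrix.mulVec_smul, Matrix.mulVec_smul, huv, hu1] at e1
    have e2 : (Λ * T).mulVec v2 = (-(γ * μ⁻¹)) • v2 := by
      rw [← Matrix.mulVec_mulVec, F7, Matrix.mulVec_smul, ← hv2def]
    rw [e2, ← hpq] at e1
    -- e1 : p•(μ•v) + q•((-μ)•v1) = (-(γμ⁻¹))•(p•v + q•v1)
    have e3 : (p * μ + (γ * μ⁻¹) * p) • v + (q * (-μ) + (γ * μ⁻¹) * q) • v1 = 0 := by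
      linear_combination (norm := module) e1
    obtain ⟨ep, eq⟩ := hpair _ _ e3
    by_cases hp : p = 0
    · by_cases hq : q = 0
      · -- v2 = 0, contradicting injectivity of Λ
        rw [hp, hq, zero_smul, zero_smul, add_zero] at hpq
        apply hv0
        apply dmsa_mulVec_injective hΛ1
        rw [← hv2def, ← hpq, Matrix.mulVec_zero]
      · -- q ≠ 0 : v2 = q • v1, leads to v1 ∈ ℂ v
        rw [hp, zero_smul, zero_add] at hpq
        have hv1q : v1 = q • v3 := by
          rw [hv1def, ← hpq, Matrix.mulVec_smul, ← hv3def]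
        have hv3q : v3 = (q * α) • v := by
          rw [hv3def, hv1q, Matrix.mulVec_smul, F4, smul_smul]
        have hv1v : v1 = (q * (q * α)) • v := by
          rw [hv1q, hv3q, smul_smul]
        have := hpair (q * (q * α)) (-1) (by rw [neg_smul, one_smul, ← hv1v]; abel)
        exact absurd this.2 (by norm_num)
    · -- p ≠ 0
      have hfac : μ + γ * μ⁻¹ = 0 := by
        have : p * (μ + γ * μ⁻¹) = 0 := by linear_combination ep
        exact (mul_eq_zero.mp this).resolve_left hp
      by_cases hq : q = 0
      · -- v2 = p • v : then v1 = p² v contradicting independence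
        rw [hq, zero_smul, add_zero] at hpq
        have hv1p : v1 = (p * p) • v := by
          rw [hv1def, ← hpq, Matrix.mulVec_smul, ← hv2def, ← hpq, smul_smul]
        have := hpair (p * p) (-1) (by rw [neg_smul, one_smul, ← hv1p]; abel)
        exact absurd this.2 (by norm_num)
      · -- both nonzero : μ + γ/μ = 0 and γ/μ - μ = 0 force μ = 0
        have hfac2 : γ * μ⁻¹ - μ = 0 := by
          have : q * (γ * μ⁻¹ - μ) = 0 := by linear_combination eq
          exact (mul_eq_zero.mp this).resolve_left hq
        apply hμ
        have : μ + μ = 0 := by linear_combination hfac - hfac2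
        exact add_self_eq_zero.mp this
  -- conclude
  obtain ⟨k, hk⟩ := Nat.not_odd_iff_even.mp hnodd
  omega
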